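/- Let K be a field with char K ≠ 2 and let k ∈ K satisfy k ∉ {4, -4} and k² ≠ -16 (i.e., k⁴ ≠ 256). Then the only singular point of the affine surface W_k : F(x,y,z) = x² + y² + z² + x²y²z² + k·x·y·z = 0 with k ≠ 0 is (0,0,0); that is, any point (x,y,z) with F = F_x = F_y = F_z = 0 must equal (0,0,0). -/
import Mathlib


/-- The defining polynomial of the affine surface `W_k`. -/
def Fpoly {K : Type*} [Field K] (k x y z : K) : K :=
  x ^ 2 + y ^ 2 + z ^ 2 + x ^ 2 * y ^ 2 * z ^ 2 + k * x * y * z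

/-- `∂F/∂x`. -/
def Fx {K : Type*} [Field K] (k x y z : K) : K :=
  2 * x + 2 * x * y ^ 2 * z ^ 2 + k * y * z

/-- `∂F/∂y`. -/
def Fy {K : Type*} [Field K] (k x y z : K) : K :=
  2 * y + 2 * x ^ 2 * y * z ^ 2 + k * x * z

/-- `∂F/∂z`. -/
def Fz {K : Type*} [Field K] (k x y z : K) : K :=
  2 * z + 2 * x ^ 2 * y ^ 2 * z + k * x * y

/-- If `char K ≠ 2`, `k ≠ 0`, `k ∉ {4,-4}` and `k² ≠ -16`, then the only singular
point of the affine surface `W_k` is `(0,0,0)`. -/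
theorem stmt_3 {K : Type*} [Field K] (h2 : (2 : K) ≠ 0) (k : K) (hk : k ≠ 0)
    (hk4 : k ≠ 4) (hk4' : k ≠ -4) (hk16 : k ^ 2 ≠ -16) (x y z : K)
    (hF : Fpoly k x y z = 0) (hFx : Fx k x y z = 0)
    (hFy : Fy k x y z = 0) (hFz : Fz k x y z = 0) :
    x = 0 ∧ y = 0 ∧ z = 0 := by
  simp only [Fpoly, Fx, Fy, Fz] at hF hFx hFy hFz
  have key : x * y * z * (4 * (x * y * z) + k) = 0 := by
    linear_combination x * hFx + y * hFy + z * hFz - 2 * hF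
  rcases mul_eq_zero.mp key with h0 | h
  · -- xyz = 0
    rcases mul_eq_zero.mp h0 with h0 | hz0
    · rcases mul_eq_zero.mp h0 with hx0 | hy0
      · subst hx0
        have hyz : y * z = 0 := by
          have : k * (y * z) = 0 := by linear_combination hFx
          exact (mul_eq_zero.mp this).resolve_left hk
        rcases mul_eq_zero.mp hyz with hy0 | hz0
        · subst hy0
          have hz0 : z = 0 := by
            have : 2 * z = 0 := by linear_combination hFz
            exact (mul_eq_zero.mp this).resolve_left h2
          exact ⟨rfl, rfl, hz0⟩
        · subst hz0
          have hy0 : y = 0 := by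
            have : 2 * y = 0 := by linear_combination hFy
            exact (mul_eq_zero.mp this).resolve_left h2
          exact ⟨rfl, hy0, rfl⟩
      · subst hy0
        have hxz : x * z = 0 := by
          have : k * (x * z) = 0 := by linear_combination hFy
          exact (mul_eq_zero.mp this).resolve_left hk
        rcases mul_eq_zero.mp hxz with hx0 | hz0
        · subst hx0
          have hz0 : z = 0 := by
            have : 2 * z = 0 := by linear_combination hFz
            exact (mul_eq_zero.mp this).resolve_left h2
          exact ⟨rfl, rfl, hz0⟩
        · subst hz0
          have hx0 : x = 0 := by
            have : 2 * x = 0 := by linear_combination hFx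
            exact (mul_eq_zero.mp this).resolve_left h2
          exact ⟨hx0, rfl, rfl⟩
    · subst hz0
      have hxy : x * y = 0 := by
        have : k * (x * y) = 0 := by linear_combination hFz
        exact (mul_eq_zero.mp this).resolve_left hk
      rcases mul_eq_zero.mp hxy with hx0 | hy0
      · subst hx0
        have hy0 : y = 0 := by
          have : 2 * y = 0 := by linear_combination hFy
          exact (mul_eq_zero.mp this).resolve_left h2
        exact ⟨rfl, hy0, rfl⟩
      · subst hy0
        have hx0 : x = 0 := by
          have : 2 * x = 0 := by linear_combination hFx
          exact (mul_eq_zero.mp this).resolve_left h2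
        exact ⟨hx0, rfl, rfl⟩
  · -- 4xyz + k = 0 : derive a contradiction
    exfalso
    have hx2 : 16 * x ^ 2 = k ^ 2 := by
      linear_combination 8 * x * hFx - (4 * (x * y * z) + k) * h
    have hy2 : 16 * y ^ 2 = k ^ 2 := by
      linear_combination 8 * y * hFy - (4 * (x * y * z) + k) * h
    have hz2 : 16 * z ^ 2 = k ^ 2 := by
      linear_combination 8 * z * hFz - (4 * (x * y * z) + k) * h
    have hq : 16 * (x * y * z) ^ 2 = k ^ 2 := by
      linear_combination (4 * (x * y * z) - k) * h
    have hk6 : k ^ 6 = 256 * k ^ 2 := by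
      linear_combination -256 * y ^ 2 * z ^ 2 * hx2 - 16 * k ^ 2 * z ^ 2 * hy2
        - k ^ 4 * hz2 + 256 * hq
    have hk4eq : k ^ 4 = 256 := by
      have hk2 : k ^ 2 ≠ 0 := pow_ne_zero 2 hk
      have h' : k ^ 2 * (k ^ 4 - 256) = 0 := by linear_combination hk6
      have := (mul_eq_zero.mp h').resolve_left hk2
      linear_combination this
    have hfac : (k - 4) * ((k + 4) * (k ^ 2 + 16)) = 0 := by
      linear_combination hk4eq
    rcases mul_eq_zero.mp hfac with h' | h'
    · exact hk4 (by linear_combination h')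
    · rcases mul_eq_zero.mp h' with h'' | h''
      · exact hk4' (by linear_combination h'')
      · exact hk16 (by linear_combination h'')
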